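/- Let ω1, ω2 be two states with prior probabilities μ1, μ2 > 0, and let a1 ≠ ã be two actions whose receiver utilities lie in [0,1] and satisfy v(a1,ω1) − v(ã,ω1) ≥ G for some G > 0. Suppose the real numbers ℓ, r ≥ 0 and ε > 0 satisfy: (i) μ1·(v(a1,ω1) − v(ã,ω1)) + μ2·ℓ·(v(a1,ω2) − v(ã,ω2)) ≥ 0; (ii) μ1·(v(a1,ω1) − v(ã,ω1)) + μ2·r·(v(a1,ω2) − v(ã,ω2)) ≤ 0; and (iii) r − ℓ ≤ εG. Then ρ̂ := ℓ·(v(ã,ω2) − v(a1,ω2))/(v(a1,ω1) − v(ã,ω1)) satisfies ρ̂ ≤ μ1/μ2 ≤ ρ̂ + ε. -/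

import Mathlib

/-- correctness of the binary-search output, Lemma 2:
if the receiver weakly prefers `a1` at likelihood ratio `ℓ`, weakly prefers `ã` at
likelihood ratio `r`, and `r − ℓ ≤ εG`, then
`ρ̂ = ℓ·(v(ã,ω2) − v(a1,ω2))/(v(a1,ω1) − v(ã,ω1))` satisfies
`ρ̂ ≤ μ1/μ2 ≤ ρ̂ + ε`. -/
theorem binary_search_ratio_estimate
    {Ω A : Type*} (ω1 ω2 : Ω) (a1 atilde : A) (v : A → Ω → ℝ)
    (μ1 μ2 G ε ℓ r : ℝ)
    (hμ1 : 0 < μ1) (hμ2 : 0 < μ2)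
    (hane : a1 ≠ atilde)
    (hv : ∀ a ω, v a ω ∈ Set.Icc (0 : ℝ) 1)
    (hG : 0 < G) (hgap : G ≤ v a1 ω1 - v atilde ω1)
    (hℓ : 0 ≤ ℓ) (hr : 0 ≤ r) (hε : 0 < ε)
    (hpref1 : 0 ≤ μ1 * (v a1 ω1 - v atilde ω1) + μ2 * ℓ * (v a1 ω2 - v atilde ω2))
    (hpref2 : μ1 * (v a1 ω1 - v atilde ω1) + μ2 * r * (v a1 ω2 - v atilde ω2) ≤ 0)
    (hclose : r - ℓ ≤ ε * G) :
    ℓ * ((v atilde ω2 - v a1 ω2) / (v a1 ω1 - v atilde ω1)) ≤ μ1 / μ2 ∧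
    μ1 / μ2 ≤ ℓ * ((v atilde ω2 - v a1 ω2) / (v a1 ω1 - v atilde ω1)) + ε := by
  have hD1 : 0 < v a1 ω1 - v atilde ω1 := lt_of_lt_of_le hG hgap
  have hD2 : v a1 ω2 - v atilde ω2 ≤ 0 := by
    by_contra h
    push_neg at h
    nlinarith [mul_pos hμ1 hD1, mul_nonneg (mul_nonneg hμ2.le hr) h.le]
  obtain ⟨h1a, h1b⟩ := hv a1 ω2
  obtain ⟨h2a, h2b⟩ := hv atilde ω2
  set x := (v atilde ω2 - v a1 ω2) / (v a1 ω1 - v atilde ω1) with hxdef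
  have hx : x * (v a1 ω1 - v atilde ω1) = v atilde ω2 - v a1 ω2 :=
    div_mul_cancel₀ _ (ne_of_gt hD1)
  constructor
  · rw [le_div_iff₀ hμ2, ← mul_le_mul_iff_of_pos_right hD1]
    have e1 : ℓ * x * μ2 * (v a1 ω1 - v atilde ω1)
        = μ2 * ℓ * (v atilde ω2 - v a1 ω2) := by
      linear_combination (ℓ * μ2) * hx
    linarith [hpref1, e1]
  · rw [div_le_iff₀ hμ2, ← mul_le_mul_iff_of_pos_right hD1]
    have hA : 0 ≤ μ2 * ((ε*G - (r - ℓ)) * (v atilde ω2 - v a1 ω2)) :=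
      mul_nonneg hμ2.le (mul_nonneg (by linarith) (by linarith))
    have hB : 0 ≤ μ2 * (ε*G*(1 - (v atilde ω2 - v a1 ω2))) :=
      mul_nonneg hμ2.le (mul_nonneg (mul_pos hε hG).le (by linarith))
    have hC : 0 ≤ μ2 * (ε * ((v a1 ω1 - v atilde ω1) - G)) :=
      mul_nonneg hμ2.le (mul_nonneg hε.le (by linarith))
    have e2 : (ℓ * x + ε) * μ2 * (v a1 ω1 - v atilde ω1)
        = μ2 * ℓ * (v atilde ω2 - v a1 ω2) + ε * μ2 * (v a1 ω1 - v atilde ω1) := by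
      linear_combination (ℓ * μ2) * hx
    linarith [hpref2, e2, hA, hB, hC]
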